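/- Let p, q, r be pairwise coprime positive integers and F_k as defined by the unique representation k + F_k·pqr = a_k·qr + b_k·rp + c_k·pq. Then for every integer k, F_k - F_{k-p} - F_{k-q} - F_{k-r} + F_{k-q-r} + F_{k-r-p} + F_{k-p-q} - F_{k-p-q-r} = 0. -/
import Mathlib

lemma stmt5_key (p m : ℤ) (hco : IsCoprime p m)
    (a a' : ℤ) (h0 : 0 ≤ a) (h1 : a < p) (h0' : 0 ≤ a') (h1' : a' < p)
    (h : p ∣ a * m - a' * m) : a = a' := by
  have h2 : p ∣ (a - a') * m := by rwa [sub_mul]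
  have h3 : p ∣ a - a' := hco.dvd_of_dvd_mul_right h2
  have h4 : a - a' = 0 :=
    Int.eq_zero_of_abs_lt_dvd h3 (abs_lt.mpr ⟨by linarith, by linarith⟩)
  linarith

/-- If `F : ℤ → ℤ` satisfies, for every `k`, `k + F k · pqr = a·qr + b·rp + c·pq` for some
`0 ≤ a < p`, `0 ≤ b < q`, `0 ≤ c < r`, then
`F k - F (k-p) - F (k-q) - F (k-r) + F (k-q-r) + F (k-r-p) + F (k-p-q) - F (k-p-q-r) = 0`. -/
theorem stmt5 (p q r : ℤ) (hp : 0 < p) (hq : 0 < q) (hr : 0 < r)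
    (hpq : IsCoprime p q) (hqr : IsCoprime q r) (hrp : IsCoprime r p)
    (F : ℤ → ℤ)
    (hF : ∀ k : ℤ, ∃ a b c : ℤ, 0 ≤ a ∧ a < p ∧ 0 ≤ b ∧ b < q ∧ 0 ≤ c ∧ c < r ∧
      k + F k * (p * q * r) = a * (q * r) + b * (r * p) + c * (p * q)) :
    ∀ k : ℤ, F k - F (k - p) - F (k - q) - F (k - r)
      + F (k - q - r) + F (k - r - p) + F (k - p - q) - F (k - p - q - r) = 0 := by
  intro k
  obtain ⟨a0, b0, c0, ha0, ha0', hb0, hb0', hc0, hc0', e0⟩ := hF k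
  obtain ⟨a1, b1, c1, ha1, ha1', hb1, hb1', hc1, hc1', e1⟩ := hF (k - p)
  obtain ⟨a2, b2, c2, ha2, ha2', hb2, hb2', hc2, hc2', e2⟩ := hF (k - q)
  obtain ⟨a3, b3, c3, ha3, ha3', hb3, hb3', hc3, hc3', e3⟩ := hF (k - r)
  obtain ⟨a4, b4, c4, ha4, ha4', hb4, hb4', hc4, hc4', e4⟩ := hF (k - q - r)
  obtain ⟨a5, b5, c5, ha5, ha5', hb5, hb5', hc5, hc5', e5⟩ := hF (k - r - p)
  obtain ⟨a6, b6, c6, ha6, ha6', hb6, hb6', hc6, hc6', e6⟩ := hF (k - p - q)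
  obtain ⟨a7, b7, c7, ha7, ha7', hb7, hb7', hc7, hc7', e7⟩ := hF (k - p - q - r)
  have hP : IsCoprime p (q * r) := hpq.mul_right hrp.symm
  have hQ : IsCoprime q (r * p) := hqr.mul_right hpq.symm
  have hR : IsCoprime r (p * q) := hrp.mul_right hqr.symm
  -- a-equalities (pairs differing by p)
  have hA1 : a0 = a1 := stmt5_key p (q*r) hP a0 a1 ha0 ha0' ha1 ha1'
    ⟨1 + (F k - F (k - p)) * (q * r) - (b0 - b1) * r - (c0 - c1) * q,
      by linear_combination e1 - e0⟩
  have hA2 : a2 = a6 := stmt5_key p (q*r) hP a2 a6 ha2 ha2' ha6 ha6'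
    ⟨1 + (F (k - q) - F (k - p - q)) * (q * r) - (b2 - b6) * r - (c2 - c6) * q,
      by linear_combination e6 - e2⟩
  have hA3 : a3 = a5 := stmt5_key p (q*r) hP a3 a5 ha3 ha3' ha5 ha5'
    ⟨1 + (F (k - r) - F (k - r - p)) * (q * r) - (b3 - b5) * r - (c3 - c5) * q,
      by linear_combination e5 - e3⟩
  have hA4 : a4 = a7 := stmt5_key p (q*r) hP a4 a7 ha4 ha4' ha7 ha7'
    ⟨1 + (F (k - q - r) - F (k - p - q - r)) * (q * r) - (b4 - b7) * r - (c4 - c7) * q,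
      by linear_combination e7 - e4⟩
  -- b-equalities (pairs differing by q)
  have hB1 : b0 = b2 := stmt5_key q (r*p) hQ b0 b2 hb0 hb0' hb2 hb2'
    ⟨1 + (F k - F (k - q)) * (r * p) - (a0 - a2) * r - (c0 - c2) * p,
      by linear_combination e2 - e0⟩
  have hB2 : b1 = b6 := stmt5_key q (r*p) hQ b1 b6 hb1 hb1' hb6 hb6'
    ⟨1 + (F (k - p) - F (k - p - q)) * (r * p) - (a1 - a6) * r - (c1 - c6) * p,
      by linear_combination e6 - e1⟩
  have hB3 : b3 = b4 := stmt5_key q (r*p) hQ b3 b4 hb3 hb3' hb4 hb4'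
    ⟨1 + (F (k - r) - F (k - q - r)) * (r * p) - (a3 - a4) * r - (c3 - c4) * p,
      by linear_combination e4 - e3⟩
  have hB4 : b5 = b7 := stmt5_key q (r*p) hQ b5 b7 hb5 hb5' hb7 hb7'
    ⟨1 + (F (k - r - p) - F (k - p - q - r)) * (r * p) - (a5 - a7) * r - (c5 - c7) * p,
      by linear_combination e7 - e5⟩
  -- c-equalities (pairs differing by r)
  have hC1 : c0 = c3 := stmt5_key r (p*q) hR c0 c3 hc0 hc0' hc3 hc3'
    ⟨1 + (F k - F (k - r)) * (p * q) - (a0 - a3) * q - (b0 - b3) * p,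
      by linear_combination e3 - e0⟩
  have hC2 : c1 = c5 := stmt5_key r (p*q) hR c1 c5 hc1 hc1' hc5 hc5'
    ⟨1 + (F (k - p) - F (k - r - p)) * (p * q) - (a1 - a5) * q - (b1 - b5) * p,
      by linear_combination e5 - e1⟩
  have hC3 : c2 = c4 := stmt5_key r (p*q) hR c2 c4 hc2 hc2' hc4 hc4'
    ⟨1 + (F (k - q) - F (k - q - r)) * (p * q) - (a2 - a4) * q - (b2 - b4) * p,
      by linear_combination e4 - e2⟩
  have hC4 : c6 = c7 := stmt5_key r (p*q) hR c6 c7 hc6 hc6' hc7 hc7'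
    ⟨1 + (F (k - p - q) - F (k - p - q - r)) * (p * q) - (a6 - a7) * q - (b6 - b7) * p,
      by linear_combination e7 - e6⟩
  have hne : (p * q * r) ≠ 0 := by positivity
  have hS : (F k - F (k - p) - F (k - q) - F (k - r)
      + F (k - q - r) + F (k - r - p) + F (k - p - q) - F (k - p - q - r)) * (p * q * r) = 0 := by
    linear_combination e0 - e1 - e2 - e3 + e4 + e5 + e6 - e7
      + (q * r) * (hA1 - hA2 - hA3 + hA4) + (r * p) * (hB1 - hB2 - hB3 + hB4)
      + (p * q) * (hC1 - hC2 - hC3 + hC4)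
  exact (mul_eq_zero.mp hS).resolve_right hne
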